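/- Fix m ≥ 1 and an invertible symmetric matrix g ∈ Mₘ(ℝ) with inverse entries g^{jk}. Let U ⊆ ℝᵐ be open, let v, σ : U → ℝ be C² and ℓ : U → ℝ be C³. Define q = −⟨∇ℓ,∇ℓ⟩ − □ℓ − σ, S = □v + q v, and σ̃ = σ + □ℓ. Then at every point of U the following identity holds: (eˡ □(e^{−ℓ} v))² / 2 = S²/2 + 2⟨∇ℓ,∇v⟩² + P + R + div B, where P = σ̃⟨∇v,∇v⟩ + 2 Hess ℓ(∇v,∇v) + (−σ̃⟨∇ℓ,∇ℓ⟩ + 2 Hess ℓ(∇ℓ,∇ℓ)) v², R = (div((□ℓ)∇ℓ) − σσ̃ + σ²/2 + (□σ)/2) v², and B = −(2⟨∇ℓ,∇v⟩ + σv)∇v + (v²/2)∇σ + (⟨∇v,∇v⟩ − (□ℓ + ⟨∇ℓ,∇ℓ⟩)v²)∇ℓ. (This is the paper's pointwise Carleman identity for the conjugated wave operator, in the case of a constant-coefficient semi-Riemannian metric on ℝᵐ; the paper proves it on general semi-Riemannian manifolds.) -/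

import Mathlib

noncomputable section

/-- Partial derivative in the `j`-th coordinate on `Fin m → ℝ`. -/
def pd {m : ℕ} (j : Fin m) (f : (Fin m → ℝ) → ℝ) (x : Fin m → ℝ) : ℝ :=
  deriv (fun s => f (Function.update x j s)) (x j)

/-- The pairing `⟨X,Y⟩ = ∑ g_{jk} Xʲ Y^k` for the constant metric `g`. -/
def pairV {m : ℕ} (g : Matrix (Fin m) (Fin m) ℝ) (X Y : Fin m → ℝ) : ℝ :=
  ∑ j, ∑ k, g j k * X j * Y k

/-- The gradient `(∇f)ʲ = ∑ g^{jk} ∂_k f` with respect to the constant metric. -/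
def grad {m : ℕ} (ginv : Matrix (Fin m) (Fin m) ℝ) (f : (Fin m → ℝ) → ℝ)
    (x : Fin m → ℝ) : Fin m → ℝ :=
  fun j => ∑ k, ginv j k * pd k f x

/-- The divergence `div X = ∑ ∂_j Xʲ`. -/
def divV {m : ℕ} (X : (Fin m → ℝ) → Fin m → ℝ) (x : Fin m → ℝ) : ℝ :=
  ∑ j, pd j (fun y => X y j) x

/-- The wave operator `□f = −∑ g^{jk} ∂_j ∂_k f`. -/
def box {m : ℕ} (ginv : Matrix (Fin m) (Fin m) ℝ) (f : (Fin m → ℝ) → ℝ)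
    (x : Fin m → ℝ) : ℝ :=
  -∑ j, ∑ k, ginv j k * pd j (fun y => pd k f y) x

/-- The Hessian `Hess f(X,Y) = ∑ Xʲ Y^k ∂_j ∂_k f`. -/
def hessV {m : ℕ} (f : (Fin m → ℝ) → ℝ) (X Y : Fin m → ℝ) (x : Fin m → ℝ) : ℝ :=
  ∑ j, ∑ k, X j * Y k * pd j (fun y => pd k f y) x

namespace Carl

open Matrix

variable {m : ℕ}

/-- `f` has partial derivative `d` in direction `j` at `x`. -/
def HasPdAt (f : (Fin m → ℝ) → ℝ) (j : Fin m) (x : Fin m → ℝ) (d : ℝ) : Prop :=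
  HasDerivAt (fun s => f (Function.update x j s)) d (x j)

theorem HasPdAt.pd_eq {f : (Fin m → ℝ) → ℝ} {j x d} (h : HasPdAt f j x d) :
    pd j f x = d := h.deriv

theorem HasPdAt.self {f : (Fin m → ℝ) → ℝ} {j x d} (h : HasPdAt f j x d) :
    HasPdAt f j x (pd j f x) := by rwa [h.pd_eq]

theorem hasDerivAt_update (x : Fin m → ℝ) (j : Fin m) :
    HasDerivAt (fun s => Function.update x j s) (Pi.single j (1:ℝ)) (x j) := by
  have : (fun s : ℝ => Function.update x j s)
      = fun s => x + (s - x j) • (Pi.single j (1:ℝ) : Fin m → ℝ) := by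
    funext s
    ext i
    by_cases h : i = j
    · subst h; simp
    · simp [Function.update_of_ne h, Pi.single_apply, h]
  rw [this]
  simpa using (((hasDerivAt_id (x j)).sub_const (x j)).smul_const
    (Pi.single j (1:ℝ) : Fin m → ℝ)).const_add x

theorem hasPdAt_of_hasFDerivAt {f : (Fin m → ℝ) → ℝ} {x : Fin m → ℝ}
    {L : (Fin m → ℝ) →L[ℝ] ℝ} (h : HasFDerivAt f L x) (j : Fin m) :
    HasPdAt f j x (L (Pi.single j 1)) := by
  have h' : HasFDerivAt f L (Function.update x j (x j)) := by
    rwa [Function.update_eq_self]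
  have h2 := h'.comp_hasDerivAt (x j) (hasDerivAt_update x j)
  exact h2

theorem tendsto_update (x : Fin m → ℝ) (j : Fin m) :
    Filter.Tendsto (fun s => Function.update x j s) (nhds (x j)) (nhds x) := by
  have := (hasDerivAt_update x j).continuousAt
  rwa [ContinuousAt, Function.update_eq_self] at this

theorem HasPdAt.congr {f g : (Fin m → ℝ) → ℝ} {j x d}
    (h : HasPdAt g j x d) (he : f =ᶠ[nhds x] g) : HasPdAt f j x d :=
  HasDerivAt.congr_of_eventuallyEq h (he.comp_tendsto (tendsto_update x j))

variable {f g : (Fin m → ℝ) → ℝ} {j : Fin m} {x : Fin m → ℝ} {d e : ℝ}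

theorem HasPdAt.add (hf : HasPdAt f j x d) (hg : HasPdAt g j x e) :
    HasPdAt (fun y => f y + g y) j x (d + e) := HasDerivAt.add hf hg

theorem HasPdAt.sub (hf : HasPdAt f j x d) (hg : HasPdAt g j x e) :
    HasPdAt (fun y => f y - g y) j x (d - e) := HasDerivAt.sub hf hg

theorem HasPdAt.neg (hf : HasPdAt f j x d) :
    HasPdAt (fun y => -f y) j x (-d) := HasDerivAt.neg hf

theorem HasPdAt.mul (hf : HasPdAt f j x d) (hg : HasPdAt g j x e) :
    HasPdAt (fun y => f y * g y) j x (d * g x + f x * e) := by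
  have := HasDerivAt.mul hf hg
  simp only [Function.update_eq_self] at this
  exact this

theorem hasPdAt_const (j : Fin m) (x : Fin m → ℝ) (c : ℝ) :
    HasPdAt (fun _ => c) j x 0 := hasDerivAt_const _ _

theorem HasPdAt.const_mul (c : ℝ) (hf : HasPdAt f j x d) :
    HasPdAt (fun y => c * f y) j x (c * d) := HasDerivAt.const_mul c hf

theorem HasPdAt.mul_const (hf : HasPdAt f j x d) (c : ℝ) :
    HasPdAt (fun y => f y * c) j x (d * c) := HasDerivAt.mul_const hf c

theorem HasPdAt.div_const (hf : HasPdAt f j x d) (c : ℝ) :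
    HasPdAt (fun y => f y / c) j x (d / c) := HasDerivAt.div_const hf c

theorem HasPdAt.pow2 (hf : HasPdAt f j x d) :
    HasPdAt (fun y => f y ^ 2) j x (2 * f x * d) := by
  have h2 : (fun y => f y * f y) = fun y => f y ^ 2 := by funext y; ring
  have := hf.mul hf
  rw [h2] at this
  convert this using 1; ring

theorem HasPdAt.exp (hf : HasPdAt f j x d) :
    HasPdAt (fun y => Real.exp (f y)) j x (Real.exp (f x) * d) := by
  have := HasDerivAt.exp hf
  simp only [Function.update_eq_self] at this
  exact this

theorem HasPdAt.sum {ι : Type*} {s : Finset ι} {F : ι → (Fin m → ℝ) → ℝ} {D : ι → ℝ}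
    (h : ∀ i ∈ s, HasPdAt (F i) j x (D i)) :
    HasPdAt (fun y => ∑ i ∈ s, F i y) j x (∑ i ∈ s, D i) :=
  HasDerivAt.fun_sum h

variable {U : Set (Fin m → ℝ)}

theorem hasPdAt_fderiv (hf : DifferentiableAt ℝ f x) (j : Fin m) :
    HasPdAt f j x (fderiv ℝ f x (Pi.single j 1)) :=
  hasPdAt_of_hasFDerivAt hf.hasFDerivAt j

theorem hasPdAt_base (hU : IsOpen U) (hf : DifferentiableOn ℝ f U) (hx : x ∈ U) (j : Fin m) :
    HasPdAt f j x (pd j f x) :=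
  (hasPdAt_fderiv (hf.differentiableAt (hU.mem_nhds hx)) j).self

theorem eventually_pd_eq (hU : IsOpen U) (hf : DifferentiableOn ℝ f U) (hx : x ∈ U) (k : Fin m) :
    (fun y => pd k f y) =ᶠ[nhds x] (fun y => fderiv ℝ f y (Pi.single k 1)) := by
  filter_upwards [hU.mem_nhds hx] with y hy
  exact (hasPdAt_fderiv (hf.differentiableAt (hU.mem_nhds hy)) k).pd_eq

theorem hasPdAt_pd (hU : IsOpen U) (hf : ContDiffOn ℝ 2 f U) (hx : x ∈ U) (j k : Fin m) :
    HasPdAt (fun y => pd k f y) j x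
      (fderiv ℝ (fderiv ℝ f) x (Pi.single j 1) (Pi.single k 1)) := by
  set G := fderiv ℝ f with hGdef
  have hG : ContDiffOn ℝ 1 G U := hf.fderiv_of_isOpen hU (by norm_num)
  have hGd : DifferentiableAt ℝ G x :=
    ((hG.differentiableOn (by norm_num)).differentiableAt (hU.mem_nhds hx))
  have hΦ := (ContinuousLinearMap.apply ℝ ℝ (Pi.single k 1 : Fin m → ℝ)).hasFDerivAt.comp x
    hGd.hasFDerivAt
  have h3 : HasPdAt (fun y => G y (Pi.single k 1)) j x
      (fderiv ℝ G x (Pi.single j 1) (Pi.single k 1)) := by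
    exact hasPdAt_of_hasFDerivAt hΦ j
  exact h3.congr (eventually_pd_eq hU (hf.differentiableOn (by norm_num)) hx k)

theorem hasPdAt_pd_self (hU : IsOpen U) (hf : ContDiffOn ℝ 2 f U) (hx : x ∈ U) (j k : Fin m) :
    HasPdAt (fun y => pd k f y) j x (pd j (fun y => pd k f y) x) :=
  (hasPdAt_pd hU hf hx j k).self

theorem pd_pd_symm (hU : IsOpen U) (hf : ContDiffOn ℝ 2 f U) (hx : x ∈ U) (j k : Fin m) :
    pd j (fun y => pd k f y) x = pd k (fun y => pd j f y) x := by
  rw [(hasPdAt_pd hU hf hx j k).pd_eq, (hasPdAt_pd hU hf hx k j).pd_eq]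
  have hG : ContDiffOn ℝ 1 (fderiv ℝ f) U := hf.fderiv_of_isOpen hU (by norm_num)
  have hGd : DifferentiableAt ℝ (fderiv ℝ f) x :=
    ((hG.differentiableOn (by norm_num)).differentiableAt (hU.mem_nhds hx))
  have hev : ∀ᶠ y in nhds x, HasFDerivAt f (fderiv ℝ f y) y := by
    filter_upwards [hU.mem_nhds hx] with y hy
    exact ((hf.differentiableOn (by norm_num)).differentiableAt (hU.mem_nhds hy)).hasFDerivAt
  exact second_derivative_symmetric_of_eventually hev hGd.hasFDerivAt _ _

theorem hasPdAt_pd_pd_self (hU : IsOpen U) (hf : ContDiffOn ℝ 3 f U) (hx : x ∈ U)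
    (j k l : Fin m) :
    HasPdAt (fun y => pd k (fun z => pd l f z) y) j x
      (pd j (fun y => pd k (fun z => pd l f z) y) x) := by
  set G := fderiv ℝ f with hGdef
  set H := fderiv ℝ G with hHdef
  have hG : ContDiffOn ℝ 2 G U := hf.fderiv_of_isOpen hU (by norm_num)
  have hH : ContDiffOn ℝ 1 H U := hG.fderiv_of_isOpen hU (by norm_num)
  have hHd : DifferentiableAt ℝ H x :=
    ((hH.differentiableOn (by norm_num)).differentiableAt (hU.mem_nhds hx))
  have hΦ := (hHd.hasFDerivAt.clm_apply (hasFDerivAt_const (Pi.single k (1:ℝ)) x)).clm_apply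
    (hasFDerivAt_const (Pi.single l (1:ℝ)) x)
  have h3 : HasPdAt (fun y => H y (Pi.single k 1) (Pi.single l 1)) j x
      (fderiv ℝ H x (Pi.single j 1) (Pi.single k 1) (Pi.single l 1)) := by
    simpa using hasPdAt_of_hasFDerivAt hΦ j
  refine HasPdAt.self (h3.congr ?_)
  filter_upwards [hU.mem_nhds hx] with y hy
  have := (hasPdAt_pd hU (hf.of_le (by norm_num)) hy k l).pd_eq
  simpa using this

theorem ginv_isSymm {g ginv : Matrix (Fin m) (Fin m) ℝ} (hg : g.IsSymm)
    (hginv : g * ginv = 1) (hginv' : ginv * g = 1) : ginv.IsSymm := by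
  have h1 : ginvᵀ * g = 1 := by
    rw [← hg.eq, ← Matrix.transpose_mul, hginv, Matrix.transpose_one]
  show ginvᵀ = ginv
  calc ginvᵀ = ginvᵀ * (g * ginv) := by rw [hginv, Matrix.mul_one]
    _ = (ginvᵀ * g) * ginv := by rw [Matrix.mul_assoc]
    _ = ginv := by rw [h1, Matrix.one_mul]

theorem dot_expand (M : Matrix (Fin m) (Fin m) ℝ) (p q : Fin m → ℝ) :
    p ⬝ᵥ M *ᵥ q = ∑ j, ∑ k, M j k * p j * q k := by
  simp only [dotProduct, Matrix.mulVec, Finset.mul_sum]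
  exact Finset.sum_congr rfl fun j _ => Finset.sum_congr rfl fun k _ => by ring

theorem grad_eq_mulVec {ginv : Matrix (Fin m) (Fin m) ℝ} (f : (Fin m → ℝ) → ℝ) (x : Fin m → ℝ) :
    grad ginv f x = ginv.mulVec (fun k => pd k f x) := by
  funext j
  simp [grad, Matrix.mulVec, dotProduct]

theorem pair_grad {g ginv : Matrix (Fin m) (Fin m) ℝ} (hg : g.IsSymm)
    (hginv : g * ginv = 1) (hginv' : ginv * g = 1)
    (f h : (Fin m → ℝ) → ℝ) (x : Fin m → ℝ) :
    pairV g (grad ginv f x) (grad ginv h x) = ∑ j, ∑ k, ginv j k * pd j f x * pd k h x := by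
  have hs : ginvᵀ = ginv := ginv_isSymm hg hginv hginv'
  set p := fun k => pd k f x with hp
  set q := fun k => pd k h x with hq
  have hvm : q ᵥ* ginv = ginv *ᵥ q := by
    conv_lhs => rw [← hs]
    exact Matrix.vecMul_transpose ginv q
  calc pairV g (grad ginv f x) (grad ginv h x)
      = (ginv *ᵥ p) ⬝ᵥ g *ᵥ (ginv *ᵥ q) := by
        rw [grad_eq_mulVec, grad_eq_mulVec, pairV, ← dot_expand]
    _ = (ginv *ᵥ p) ⬝ᵥ q := by rw [Matrix.mulVec_mulVec, hginv, Matrix.one_mulVec]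
    _ = p ⬝ᵥ ginv *ᵥ q := by
        rw [dotProduct_comm, Matrix.dotProduct_mulVec, hvm, dotProduct_comm]
    _ = ∑ j, ∑ k, ginv j k * pd j f x * pd k h x := dot_expand ginv p q

end Carl

namespace Carl

variable {m : ℕ}

theorem sum2_split (F G : Fin m → Fin m → ℝ) :
    ∑ j, ∑ k, (F j k + G j k) = (∑ j, ∑ k, F j k) + (∑ j, ∑ k, G j k) := by
  rw [← Finset.sum_add_distrib]
  exact Finset.sum_congr rfl fun j _ => Finset.sum_add_distrib

theorem vec_pair (ginv : Matrix (Fin m) (Fin m) ℝ) (r s : Fin m → ℝ) :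
    ∑ j, r j * (∑ i, ginv j i * s i) = ∑ j, ∑ k, ginv j k * r j * s k :=
  Finset.sum_congr rfl fun j _ => by
    rw [Finset.mul_sum]
    exact Finset.sum_congr rfl fun k _ => by ring

theorem sum_swap_pair (ginv : Matrix (Fin m) (Fin m) ℝ)
    (hsymm : ∀ j k, ginv j k = ginv k j) (r s : Fin m → ℝ) :
    ∑ j, ∑ k, ginv j k * r j * s k = ∑ j, ∑ k, ginv j k * s j * r k := by
  rw [Finset.sum_comm]
  exact Finset.sum_congr rfl fun k _ => Finset.sum_congr rfl fun j _ => by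
    rw [hsymm j k]; ring

theorem contract_right (ginv : Matrix (Fin m) (Fin m) ℝ)
    (M : Fin m → Fin m → ℝ) (r s : Fin m → ℝ) :
    ∑ j, (∑ i, ginv j i * r i) * (∑ p, ∑ q, ginv p q * M j p * s q)
      = ∑ j, ∑ k, (∑ i, ginv j i * r i) * (∑ i, ginv k i * s i) * M j k := by
  refine Finset.sum_congr rfl fun j _ => ?_
  rw [Finset.mul_sum]
  refine Finset.sum_congr rfl fun p _ => ?_
  have h1 : (∑ q, ginv p q * M j p * s q) = (∑ q, ginv p q * s q) * M j p := by
    rw [Finset.sum_mul]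
    exact Finset.sum_congr rfl fun q _ => by ring
  rw [h1]; ring

theorem contract_left (ginv : Matrix (Fin m) (Fin m) ℝ)
    (hsymm : ∀ j k, ginv j k = ginv k j)
    (M : Fin m → Fin m → ℝ) (r s : Fin m → ℝ) :
    ∑ j, (∑ i, ginv j i * r i) * (∑ p, ∑ q, ginv p q * s p * M j q)
      = ∑ j, ∑ k, (∑ i, ginv j i * r i) * (∑ i, ginv k i * s i) * M j k := by
  refine Finset.sum_congr rfl fun j _ => ?_
  rw [Finset.sum_comm]
  rw [Finset.mul_sum]
  refine Finset.sum_congr rfl fun q _ => ?_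
  have h1 : (∑ p, ginv p q * s p * M j q) = (∑ p, ginv q p * s p) * M j q := by
    rw [Finset.sum_mul]
    refine Finset.sum_congr rfl fun p _ => by rw [hsymm p q]
  rw [h1]; ring

end Carl

open Carl in
/-- The pointwise Carleman identity for the conjugated wave operator
`eˡ □ (e^{−ℓ} ·)`, for a constant-coefficient semi-Riemannian metric on `ℝᵐ`. -/
theorem carleman_pointwise_identity
    (m : ℕ) (hm : 1 ≤ m)
    (g ginv : Matrix (Fin m) (Fin m) ℝ) (hg : g.IsSymm)
    (hginv : g * ginv = 1) (hginv' : ginv * g = 1)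
    (U : Set (Fin m → ℝ)) (hU : IsOpen U)
    (v σ ℓ : (Fin m → ℝ) → ℝ)
    (hv : ContDiffOn ℝ 2 v U) (hσ : ContDiffOn ℝ 2 σ U) (hℓ : ContDiffOn ℝ 3 ℓ U) :
    ∀ x ∈ U,
      (Real.exp (ℓ x) * box ginv (fun y => Real.exp (-ℓ y) * v y) x) ^ 2 / 2 =
        -- S² / 2, where S = □v + q v and q = −⟨∇ℓ,∇ℓ⟩ − □ℓ − σ
        (box ginv v x +
          (-pairV g (grad ginv ℓ x) (grad ginv ℓ x) - box ginv ℓ x - σ x) * v x) ^ 2 / 2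
        -- 2⟨∇ℓ,∇v⟩²
        + 2 * (pairV g (grad ginv ℓ x) (grad ginv v x)) ^ 2
        -- P, with σ̃ = σ + □ℓ
        + ((σ x + box ginv ℓ x) * pairV g (grad ginv v x) (grad ginv v x)
            + 2 * hessV ℓ (grad ginv v x) (grad ginv v x) x
            + (-(σ x + box ginv ℓ x) * pairV g (grad ginv ℓ x) (grad ginv ℓ x)
                + 2 * hessV ℓ (grad ginv ℓ x) (grad ginv ℓ x) x) * v x ^ 2)
        -- R
        + (divV (fun y => box ginv ℓ y • grad ginv ℓ y) x
            - σ x * (σ x + box ginv ℓ x) + σ x ^ 2 / 2 + box ginv σ x / 2) * v x ^ 2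
        -- div B
        + divV (fun y =>
            (-(2 * pairV g (grad ginv ℓ y) (grad ginv v y) + σ y * v y)) • grad ginv v y
            + (v y ^ 2 / 2) • grad ginv σ y
            + (pairV g (grad ginv v y) (grad ginv v y)
                - (box ginv ℓ y + pairV g (grad ginv ℓ y) (grad ginv ℓ y)) * v y ^ 2)
              • grad ginv ℓ y) x := by
  intro x hx
  have hsymm : ∀ j k, ginv j k = ginv k j := fun j k =>
    ((ginv_isSymm hg hginv hginv').apply j k).symm
  have hℓ2 : ContDiffOn ℝ 2 ℓ U := hℓ.of_le (by norm_num)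
  have hvd : DifferentiableOn ℝ v U := hv.differentiableOn (by norm_num)
  have hℓd : DifferentiableOn ℝ ℓ U := hℓ.differentiableOn (by norm_num)
  have hσd : DifferentiableOn ℝ σ U := hσ.differentiableOn (by norm_num)
  -- first-order base facts
  have Pvy : ∀ y ∈ U, ∀ k, HasPdAt v k y (pd k v y) := fun y hy k => hasPdAt_base hU hvd hy k
  have Pℓy : ∀ y ∈ U, ∀ k, HasPdAt ℓ k y (pd k ℓ y) := fun y hy k => hasPdAt_base hU hℓd hy k
  have Pvx : ∀ k, HasPdAt v k x (pd k v x) := Pvy x hx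
  have Pℓx : ∀ k, HasPdAt ℓ k x (pd k ℓ x) := Pℓy x hx
  have Pσx : ∀ k, HasPdAt σ k x (pd k σ x) := fun k => hasPdAt_base hU hσd hx k
  -- second-order base facts at x
  have P2v : ∀ j k, HasPdAt (fun y => pd k v y) j x (pd j (fun y => pd k v y) x) :=
    fun j k => hasPdAt_pd_self hU hv hx j k
  have P2σ : ∀ j k, HasPdAt (fun y => pd k σ y) j x (pd j (fun y => pd k σ y) x) :=
    fun j k => hasPdAt_pd_self hU hσ hx j k
  have P2ℓ : ∀ j k, HasPdAt (fun y => pd k ℓ y) j x (pd j (fun y => pd k ℓ y) x) :=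
    fun j k => hasPdAt_pd_self hU hℓ2 hx j k
  have P3ℓ : ∀ j k l, HasPdAt (fun y => pd k (fun z => pd l ℓ z) y) j x (pd j (fun y => pd k (fun z => pd l ℓ z) y) x) :=
    fun j k l => hasPdAt_pd_pd_self hU hℓ hx j k l
  have Bsym : ∀ j k, pd j (fun y => pd k v y) x = pd k (fun y => pd j v y) x := fun j k => pd_pd_symm hU hv hx j k
  -- gradient-component facts
  have hGv : ∀ j, HasPdAt (fun y => ∑ k, ginv j k * pd k v y) j x
      (∑ k, ginv j k * pd j (fun y => pd k v y) x) :=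
    fun j => HasPdAt.sum fun k _ => HasPdAt.const_mul (ginv j k) (P2v j k)
  have hGσ : ∀ j, HasPdAt (fun y => ∑ k, ginv j k * pd k σ y) j x
      (∑ k, ginv j k * pd j (fun y => pd k σ y) x) :=
    fun j => HasPdAt.sum fun k _ => HasPdAt.const_mul (ginv j k) (P2σ j k)
  have hGℓ : ∀ j, HasPdAt (fun y => ∑ k, ginv j k * pd k ℓ y) j x
      (∑ k, ginv j k * pd j (fun y => pd k ℓ y) x) :=
    fun j => HasPdAt.sum fun k _ => HasPdAt.const_mul (ginv j k) (P2ℓ j k)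
  have hboxpart : ∀ j, HasPdAt (fun y => -(∑ p, ∑ q, ginv p q * pd p (fun z => pd q ℓ z) y)) j x
      (-(∑ p, ∑ q, ginv p q * pd j (fun y => pd p (fun z => pd q ℓ z) y) x)) :=
    fun j => (HasPdAt.sum fun p _ => HasPdAt.sum fun q _ =>
      HasPdAt.const_mul (ginv p q) (P3ℓ j p q)).neg
  -- swap identities
  have hswapB : (∑ j, ∑ k, ginv j k * pd j v x * pd k ℓ x) = (∑ j, ∑ k, ginv j k * pd j ℓ x * pd k v x) := sum_swap_pair ginv hsymm _ _
  have hswapD : (∑ j, ∑ k, ginv j k * pd j v x * pd k σ x) = (∑ j, ∑ k, ginv j k * pd j σ x * pd k v x) := sum_swap_pair ginv hsymm _ _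
  have hswapBup : (∑ j, ∑ k, (∑ i, ginv j i * pd i ℓ x) * (∑ i, ginv k i * pd i v x) * pd j (fun y => pd k v y) x) = (∑ j, ∑ k, (∑ i, ginv j i * pd i v x) * (∑ i, ginv k i * pd i ℓ x) * pd j (fun y => pd k v y) x) := by
    rw [Finset.sum_comm]
    refine Finset.sum_congr rfl fun k _ => Finset.sum_congr rfl fun j _ => ?_
    rw [Bsym j k]; ring
  ------------------------------------------------------------------
  -- Key 1 : the conjugated wave operator
  ------------------------------------------------------------------
  have hEk : ∀ y ∈ U, ∀ k, pd k (fun z => Real.exp (-ℓ z) * v z) y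
      = Real.exp (-ℓ y) * pd k v y - Real.exp (-ℓ y) * pd k ℓ y * v y := by
    intro y hy k
    have h1 := (((Pℓy y hy k).neg.exp).mul (Pvy y hy k)).pd_eq
    rw [h1]; ring
  have hpdpdE : ∀ j k, pd j (fun y => pd k (fun z => Real.exp (-ℓ z) * v z) y) x
      = Real.exp (-ℓ x) * (pd j (fun y => pd k v y) x - pd j ℓ x * pd k v x - pd j (fun y => pd k ℓ y) x * v x
          + pd j ℓ x * pd k ℓ x * v x - pd k ℓ x * pd j v x) := by
    intro j k
    have hev : (fun y => pd k (fun z => Real.exp (-ℓ z) * v z) y) =ᶠ[nhds x]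
        (fun y => Real.exp (-ℓ y) * pd k v y - Real.exp (-ℓ y) * pd k ℓ y * v y) := by
      filter_upwards [hU.mem_nhds hx] with y hy
      exact hEk y hy k
    have h1 := (((((Pℓx j).neg.exp).mul (P2v j k)).sub
      ((((Pℓx j).neg.exp).mul (P2ℓ j k)).mul (Pvx j))).congr hev).pd_eq
    rw [h1]; ring
  have hexp1 : Real.exp (ℓ x) * Real.exp (-ℓ x) = 1 := by
    rw [← Real.exp_add]; simp
  have key1 : Real.exp (ℓ x) * box ginv (fun y => Real.exp (-ℓ y) * v y) x
      = -(∑ j, ∑ k, ginv j k * pd j (fun y => pd k v y) x) + 2 * (∑ j, ∑ k, ginv j k * pd j ℓ x * pd k v x) + ((∑ j, ∑ k, ginv j k * pd j (fun y => pd k ℓ y) x) - (∑ j, ∑ k, ginv j k * pd j ℓ x * pd k ℓ x)) * v x := by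
    have h1 : (∑ j, ∑ k, ginv j k *
          pd j (fun y => pd k (fun z => Real.exp (-ℓ z) * v z) y) x)
        = Real.exp (-ℓ x) * ((∑ j, ∑ k, ginv j k * pd j (fun y => pd k v y) x) + (-1) * (∑ j, ∑ k, ginv j k * pd j ℓ x * pd k v x) + (-(v x)) * (∑ j, ∑ k, ginv j k * pd j (fun y => pd k ℓ y) x)
            + v x * (∑ j, ∑ k, ginv j k * pd j ℓ x * pd k ℓ x) + (-1) * (∑ j, ∑ k, ginv j k * pd j v x * pd k ℓ x)) := by
      have h2 : ∀ j k, ginv j k * pd j (fun y => pd k (fun z => Real.exp (-ℓ z) * v z) y) x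
          = Real.exp (-ℓ x) * (ginv j k * pd j (fun y => pd k v y) x
              + (-1) * (ginv j k * pd j ℓ x * pd k v x)
              + (-(v x)) * (ginv j k * pd j (fun y => pd k ℓ y) x)
              + v x * (ginv j k * pd j ℓ x * pd k ℓ x)
              + (-1) * (ginv j k * pd j v x * pd k ℓ x)) := by
        intro j k
        rw [hpdpdE j k]; ring
      calc (∑ j, ∑ k, ginv j k *
            pd j (fun y => pd k (fun z => Real.exp (-ℓ z) * v z) y) x)
          = ∑ j, ∑ k, Real.exp (-ℓ x) * (ginv j k * pd j (fun y => pd k v y) x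
              + (-1) * (ginv j k * pd j ℓ x * pd k v x)
              + (-(v x)) * (ginv j k * pd j (fun y => pd k ℓ y) x)
              + v x * (ginv j k * pd j ℓ x * pd k ℓ x)
              + (-1) * (ginv j k * pd j v x * pd k ℓ x)) :=
            Finset.sum_congr rfl fun j _ => Finset.sum_congr rfl fun k _ => h2 j k
        _ = Real.exp (-ℓ x) * ((∑ j, ∑ k, ginv j k * pd j (fun y => pd k v y) x) + (-1) * (∑ j, ∑ k, ginv j k * pd j ℓ x * pd k v x) + (-(v x)) * (∑ j, ∑ k, ginv j k * pd j (fun y => pd k ℓ y) x)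
              + v x * (∑ j, ∑ k, ginv j k * pd j ℓ x * pd k ℓ x) + (-1) * (∑ j, ∑ k, ginv j k * pd j v x * pd k ℓ x)) := by
            simp only [Finset.sum_add_distrib, ← Finset.mul_sum]
    simp only [box]
    rw [h1, hswapB]
    calc Real.exp (ℓ x) * -(Real.exp (-ℓ x) * ((∑ j, ∑ k, ginv j k * pd j (fun y => pd k v y) x) + (-1) * (∑ j, ∑ k, ginv j k * pd j ℓ x * pd k v x) + (-(v x)) * (∑ j, ∑ k, ginv j k * pd j (fun y => pd k ℓ y) x)
            + v x * (∑ j, ∑ k, ginv j k * pd j ℓ x * pd k ℓ x) + (-1) * (∑ j, ∑ k, ginv j k * pd j ℓ x * pd k v x)))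
        = (Real.exp (ℓ x) * Real.exp (-ℓ x)) * -((∑ j, ∑ k, ginv j k * pd j (fun y => pd k v y) x) + (-1) * (∑ j, ∑ k, ginv j k * pd j ℓ x * pd k v x) + (-(v x)) * (∑ j, ∑ k, ginv j k * pd j (fun y => pd k ℓ y) x)
            + v x * (∑ j, ∑ k, ginv j k * pd j ℓ x * pd k ℓ x) + (-1) * (∑ j, ∑ k, ginv j k * pd j ℓ x * pd k v x)) := by ring
      _ = -(∑ j, ∑ k, ginv j k * pd j (fun y => pd k v y) x) + 2 * (∑ j, ∑ k, ginv j k * pd j ℓ x * pd k v x) + ((∑ j, ∑ k, ginv j k * pd j (fun y => pd k ℓ y) x) - (∑ j, ∑ k, ginv j k * pd j ℓ x * pd k ℓ x)) * v x := by rw [hexp1]; ring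
  ------------------------------------------------------------------
  -- Key 5 : divergence of (□ℓ)∇ℓ
  ------------------------------------------------------------------
  have key5 : divV (fun y => box ginv ℓ y • grad ginv ℓ y) x = -(∑ j, (∑ i, ginv j i * pd i ℓ x) * (∑ k, ∑ l, ginv k l * pd j (fun y => pd k (fun z => pd l ℓ z) y) x)) - (∑ j, ∑ k, ginv j k * pd j (fun y => pd k ℓ y) x) ^ 2 := by
    rw [divV]
    simp only [Pi.smul_apply, smul_eq_mul, box, grad]
    have h1 : ∀ j, pd j (fun y =>
        -(∑ p, ∑ q, ginv p q * pd p (fun z => pd q ℓ z) y) * (∑ k, ginv j k * pd k ℓ y)) x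
        = (-(∑ p, ∑ q, ginv p q * pd j (fun y => pd p (fun z => pd q ℓ z) y) x)) * (∑ k, ginv j k * pd k ℓ x)
          + (-(∑ p, ∑ q, ginv p q * pd p (fun z => pd q ℓ z) x)) * (∑ k, ginv j k * pd j (fun y => pd k ℓ y) x) :=
      fun j => ((hboxpart j).mul (hGℓ j)).pd_eq
    calc (∑ j, pd j (fun y =>
          -(∑ p, ∑ q, ginv p q * pd p (fun z => pd q ℓ z) y) * (∑ k, ginv j k * pd k ℓ y)) x)
        = ∑ j, ((-1) * ((∑ i, ginv j i * pd i ℓ x) * (∑ p, ∑ q, ginv p q * pd j (fun y => pd p (fun z => pd q ℓ z) y) x))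
            + (-((∑ j, ∑ k, ginv j k * pd j (fun y => pd k ℓ y) x))) * (∑ k, ginv j k * pd j (fun y => pd k ℓ y) x)) := by
          refine Finset.sum_congr rfl fun j _ => ?_
          rw [h1 j]; ring
      _ = -(∑ j, (∑ i, ginv j i * pd i ℓ x) * (∑ k, ∑ l, ginv k l * pd j (fun y => pd k (fun z => pd l ℓ z) y) x)) - (∑ j, ∑ k, ginv j k * pd j (fun y => pd k ℓ y) x) ^ 2 := by
          simp only [Finset.sum_add_distrib, ← Finset.mul_sum]
          ring
  ------------------------------------------------------------------
  -- Key 6 : divergence of B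
  ------------------------------------------------------------------
  have hpairℓv : ∀ j, HasPdAt (fun y => ∑ p, ∑ q, ginv p q * pd p ℓ y * pd q v y) j x
      (∑ p, ∑ q, (ginv p q * pd j (fun y => pd p ℓ y) x * pd q v x + ginv p q * pd p ℓ x * pd j (fun y => pd q v y) x)) :=
    fun j => HasPdAt.sum fun p _ => HasPdAt.sum fun q _ =>
      (HasPdAt.const_mul (ginv p q) (P2ℓ j p)).mul (P2v j q)
  have hpairvv : ∀ j, HasPdAt (fun y => ∑ p, ∑ q, ginv p q * pd p v y * pd q v y) j x
      (∑ p, ∑ q, (ginv p q * pd j (fun y => pd p v y) x * pd q v x + ginv p q * pd p v x * pd j (fun y => pd q v y) x)) :=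
    fun j => HasPdAt.sum fun p _ => HasPdAt.sum fun q _ =>
      (HasPdAt.const_mul (ginv p q) (P2v j p)).mul (P2v j q)
  have hpairℓℓ : ∀ j, HasPdAt (fun y => ∑ p, ∑ q, ginv p q * pd p ℓ y * pd q ℓ y) j x
      (∑ p, ∑ q, (ginv p q * pd j (fun y => pd p ℓ y) x * pd q ℓ x + ginv p q * pd p ℓ x * pd j (fun y => pd q ℓ y) x)) :=
    fun j => HasPdAt.sum fun p _ => HasPdAt.sum fun q _ =>
      (HasPdAt.const_mul (ginv p q) (P2ℓ j p)).mul (P2ℓ j q)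
  have key6 : divV (fun y =>
      (-(2 * (∑ p, ∑ q, ginv p q * pd p ℓ y * pd q v y) + σ y * v y)) • grad ginv v y
      + (v y ^ 2 / 2) • grad ginv σ y
      + ((∑ p, ∑ q, ginv p q * pd p v y * pd q v y)
          - (box ginv ℓ y + (∑ p, ∑ q, ginv p q * pd p ℓ y * pd q ℓ y)) * v y ^ 2)
        • grad ginv ℓ y) x
      = (-2 * (∑ j, ∑ k, (∑ i, ginv j i * pd i v x) * (∑ i, ginv k i * pd i v x) * pd j (fun y => pd k ℓ y) x) - 2 * (∑ j, ∑ k, (∑ i, ginv j i * pd i v x) * (∑ i, ginv k i * pd i ℓ x) * pd j (fun y => pd k v y) x) - v x * (∑ j, ∑ k, ginv j k * pd j σ x * pd k v x) - σ x * (∑ j, ∑ k, ginv j k * pd j v x * pd k v x) - (2 * (∑ j, ∑ k, ginv j k * pd j ℓ x * pd k v x) + σ x * v x) * (∑ j, ∑ k, ginv j k * pd j (fun y => pd k v y) x))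
        + (v x * (∑ j, ∑ k, ginv j k * pd j σ x * pd k v x) + v x ^ 2 / 2 * (∑ j, ∑ k, ginv j k * pd j (fun y => pd k σ y) x))
        + (2 * (∑ j, ∑ k, (∑ i, ginv j i * pd i v x) * (∑ i, ginv k i * pd i ℓ x) * pd j (fun y => pd k v y) x) + v x ^ 2 * (∑ j, (∑ i, ginv j i * pd i ℓ x) * (∑ k, ∑ l, ginv k l * pd j (fun y => pd k (fun z => pd l ℓ z) y) x)) - 2 * v x ^ 2 * (∑ j, ∑ k, (∑ i, ginv j i * pd i ℓ x) * (∑ i, ginv k i * pd i ℓ x) * pd j (fun y => pd k ℓ y) x) - 2 * v x * ((∑ j, ∑ k, ginv j k * pd j ℓ x * pd k ℓ x) - (∑ j, ∑ k, ginv j k * pd j (fun y => pd k ℓ y) x)) * (∑ j, ∑ k, ginv j k * pd j ℓ x * pd k v x)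
            + ((∑ j, ∑ k, ginv j k * pd j v x * pd k v x) - ((∑ j, ∑ k, ginv j k * pd j ℓ x * pd k ℓ x) - (∑ j, ∑ k, ginv j k * pd j (fun y => pd k ℓ y) x)) * v x ^ 2) * (∑ j, ∑ k, ginv j k * pd j (fun y => pd k ℓ y) x)) := by
    rw [divV]
    simp only [Pi.add_apply, Pi.smul_apply, smul_eq_mul, box, grad]
    have hT1 : ∀ j, HasPdAt (fun y =>
        -(2 * (∑ p, ∑ q, ginv p q * pd p ℓ y * pd q v y) + σ y * v y)
          * (∑ k, ginv j k * pd k v y)) j x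
        ((-(2 * (∑ p, ∑ q, (ginv p q * pd j (fun y => pd p ℓ y) x * pd q v x + ginv p q * pd p ℓ x * pd j (fun y => pd q v y) x))
            + (pd j σ x * v x + σ x * pd j v x))) * (∑ k, ginv j k * pd k v x)
          + (-(2 * (∑ p, ∑ q, ginv p q * pd p ℓ x * pd q v x) + σ x * v x))
            * (∑ k, ginv j k * pd j (fun y => pd k v y) x)) :=
      fun j => (((hpairℓv j).const_mul 2).add ((Pσx j).mul (Pvx j))).neg.mul (hGv j)
    have hT2 : ∀ j, HasPdAt (fun y => v y ^ 2 / 2 * (∑ k, ginv j k * pd k σ y)) j x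
        ((2 * v x * pd j v x / 2) * (∑ k, ginv j k * pd k σ x)
          + (v x ^ 2 / 2) * (∑ k, ginv j k * pd j (fun y => pd k σ y) x)) :=
      fun j => (((Pvx j).pow2).div_const 2).mul (hGσ j)
    have hT3 : ∀ j, HasPdAt (fun y =>
        ((∑ p, ∑ q, ginv p q * pd p v y * pd q v y)
          - (-(∑ p, ∑ q, ginv p q * pd p (fun z => pd q ℓ z) y)
              + (∑ p, ∑ q, ginv p q * pd p ℓ y * pd q ℓ y)) * v y ^ 2)
          * (∑ k, ginv j k * pd k ℓ y)) j x
        (((∑ p, ∑ q, (ginv p q * pd j (fun y => pd p v y) x * pd q v x + ginv p q * pd p v x * pd j (fun y => pd q v y) x))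
            - (((-(∑ p, ∑ q, ginv p q * pd j (fun y => pd p (fun z => pd q ℓ z) y) x))
                + (∑ p, ∑ q, (ginv p q * pd j (fun y => pd p ℓ y) x * pd q ℓ x + ginv p q * pd p ℓ x * pd j (fun y => pd q ℓ y) x)))
                  * v x ^ 2
              + (-(∑ p, ∑ q, ginv p q * pd p (fun z => pd q ℓ z) x)
                  + (∑ p, ∑ q, ginv p q * pd p ℓ x * pd q ℓ x)) * (2 * v x * pd j v x)))
          * (∑ k, ginv j k * pd k ℓ x)
          + ((∑ p, ∑ q, ginv p q * pd p v x * pd q v x)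
              - (-(∑ p, ∑ q, ginv p q * pd p (fun z => pd q ℓ z) x)
                  + (∑ p, ∑ q, ginv p q * pd p ℓ x * pd q ℓ x)) * v x ^ 2)
            * (∑ k, ginv j k * pd j (fun y => pd k ℓ y) x)) :=
      fun j => ((hpairvv j).sub (((hboxpart j).add (hpairℓℓ j)).mul ((Pvx j).pow2))).mul (hGℓ j)
    have hsum1 : (∑ j, ((-(2 * (∑ p, ∑ q, (ginv p q * pd j (fun y => pd p ℓ y) x * pd q v x
            + ginv p q * pd p ℓ x * pd j (fun y => pd q v y) x))
            + (pd j σ x * v x + σ x * pd j v x))) * (∑ k, ginv j k * pd k v x)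
          + (-(2 * (∑ p, ∑ q, ginv p q * pd p ℓ x * pd q v x) + σ x * v x))
            * (∑ k, ginv j k * pd j (fun y => pd k v y) x)))
        = -2 * (∑ j, ∑ k, (∑ i, ginv j i * pd i v x) * (∑ i, ginv k i * pd i v x) * pd j (fun y => pd k ℓ y) x) - 2 * (∑ j, ∑ k, (∑ i, ginv j i * pd i v x) * (∑ i, ginv k i * pd i ℓ x) * pd j (fun y => pd k v y) x) - v x * (∑ j, ∑ k, ginv j k * pd j σ x * pd k v x) - σ x * (∑ j, ∑ k, ginv j k * pd j v x * pd k v x)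
          - (2 * (∑ j, ∑ k, ginv j k * pd j ℓ x * pd k v x) + σ x * v x) * (∑ j, ∑ k, ginv j k * pd j (fun y => pd k v y) x) := by
      calc (∑ j, ((-(2 * (∑ p, ∑ q, (ginv p q * pd j (fun y => pd p ℓ y) x * pd q v x
              + ginv p q * pd p ℓ x * pd j (fun y => pd q v y) x))
              + (pd j σ x * v x + σ x * pd j v x))) * (∑ k, ginv j k * pd k v x)
            + (-(2 * (∑ p, ∑ q, ginv p q * pd p ℓ x * pd q v x) + σ x * v x))
              * (∑ k, ginv j k * pd j (fun y => pd k v y) x)))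
          = ∑ j, ((-2) * ((∑ i, ginv j i * pd i v x)
                * (∑ p, ∑ q, ginv p q * pd j (fun y => pd p ℓ y) x * pd q v x))
              + (-2) * ((∑ i, ginv j i * pd i v x)
                * (∑ p, ∑ q, ginv p q * pd p ℓ x * pd j (fun y => pd q v y) x))
              + (-(v x)) * (pd j σ x * (∑ i, ginv j i * pd i v x))
              + (-(σ x)) * (pd j v x * (∑ i, ginv j i * pd i v x))
              + (-(2 * (∑ j, ∑ k, ginv j k * pd j ℓ x * pd k v x) + σ x * v x)) * (∑ k, ginv j k * pd j (fun y => pd k v y) x)) := by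
            refine Finset.sum_congr rfl fun j _ => ?_
            rw [sum2_split]; ring
        _ = -2 * (∑ j, ∑ k, (∑ i, ginv j i * pd i v x) * (∑ i, ginv k i * pd i v x) * pd j (fun y => pd k ℓ y) x) - 2 * (∑ j, ∑ k, (∑ i, ginv j i * pd i v x) * (∑ i, ginv k i * pd i ℓ x) * pd j (fun y => pd k v y) x) - v x * (∑ j, ∑ k, ginv j k * pd j σ x * pd k v x) - σ x * (∑ j, ∑ k, ginv j k * pd j v x * pd k v x)
            - (2 * (∑ j, ∑ k, ginv j k * pd j ℓ x * pd k v x) + σ x * v x) * (∑ j, ∑ k, ginv j k * pd j (fun y => pd k v y) x) := by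
            simp only [Finset.sum_add_distrib, ← Finset.mul_sum]
            rw [contract_right ginv (fun j p => pd j (fun y => pd p ℓ y) x) (fun i => pd i v x) (fun i => pd i v x),
              contract_left ginv hsymm (fun j q => pd j (fun y => pd q v y) x) (fun i => pd i v x)
                (fun i => pd i ℓ x),
              vec_pair ginv (fun j => pd j σ x) (fun i => pd i v x),
              vec_pair ginv (fun j => pd j v x) (fun i => pd i v x)]
            ring
    have hsum2 : (∑ j, ((2 * v x * pd j v x / 2) * (∑ k, ginv j k * pd k σ x)
          + (v x ^ 2 / 2) * (∑ k, ginv j k * pd j (fun y => pd k σ y) x)))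
        = v x * (∑ j, ∑ k, ginv j k * pd j σ x * pd k v x) + v x ^ 2 / 2 * (∑ j, ∑ k, ginv j k * pd j (fun y => pd k σ y) x) := by
      calc (∑ j, ((2 * v x * pd j v x / 2) * (∑ k, ginv j k * pd k σ x)
            + (v x ^ 2 / 2) * (∑ k, ginv j k * pd j (fun y => pd k σ y) x)))
          = ∑ j, ((v x) * (pd j v x * (∑ i, ginv j i * pd i σ x))
              + (v x ^ 2 / 2) * (∑ k, ginv j k * pd j (fun y => pd k σ y) x)) := by
            refine Finset.sum_congr rfl fun j _ => ?_
            ring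
        _ = v x * (∑ j, ∑ k, ginv j k * pd j σ x * pd k v x) + v x ^ 2 / 2 * (∑ j, ∑ k, ginv j k * pd j (fun y => pd k σ y) x) := by
            simp only [Finset.sum_add_distrib, ← Finset.mul_sum]
            rw [vec_pair ginv (fun j => pd j v x) (fun i => pd i σ x), hswapD]
    have hsum3 : (∑ j, (((∑ p, ∑ q, (ginv p q * pd j (fun y => pd p v y) x * pd q v x
              + ginv p q * pd p v x * pd j (fun y => pd q v y) x))
            - (((-(∑ p, ∑ q, ginv p q * pd j (fun y => pd p (fun z => pd q ℓ z) y) x))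
                + (∑ p, ∑ q, (ginv p q * pd j (fun y => pd p ℓ y) x * pd q ℓ x + ginv p q * pd p ℓ x * pd j (fun y => pd q ℓ y) x)))
                  * v x ^ 2
              + (-(∑ p, ∑ q, ginv p q * pd p (fun z => pd q ℓ z) x)
                  + (∑ p, ∑ q, ginv p q * pd p ℓ x * pd q ℓ x)) * (2 * v x * pd j v x)))
          * (∑ k, ginv j k * pd k ℓ x)
          + ((∑ p, ∑ q, ginv p q * pd p v x * pd q v x)
              - (-(∑ p, ∑ q, ginv p q * pd p (fun z => pd q ℓ z) x)
                  + (∑ p, ∑ q, ginv p q * pd p ℓ x * pd q ℓ x)) * v x ^ 2)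
            * (∑ k, ginv j k * pd j (fun y => pd k ℓ y) x)))
        = 2 * (∑ j, ∑ k, (∑ i, ginv j i * pd i v x) * (∑ i, ginv k i * pd i ℓ x) * pd j (fun y => pd k v y) x) + v x ^ 2 * (∑ j, (∑ i, ginv j i * pd i ℓ x) * (∑ k, ∑ l, ginv k l * pd j (fun y => pd k (fun z => pd l ℓ z) y) x)) - 2 * v x ^ 2 * (∑ j, ∑ k, (∑ i, ginv j i * pd i ℓ x) * (∑ i, ginv k i * pd i ℓ x) * pd j (fun y => pd k ℓ y) x) - 2 * v x * ((∑ j, ∑ k, ginv j k * pd j ℓ x * pd k ℓ x) - (∑ j, ∑ k, ginv j k * pd j (fun y => pd k ℓ y) x)) * (∑ j, ∑ k, ginv j k * pd j ℓ x * pd k v x)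
          + ((∑ j, ∑ k, ginv j k * pd j v x * pd k v x) - ((∑ j, ∑ k, ginv j k * pd j ℓ x * pd k ℓ x) - (∑ j, ∑ k, ginv j k * pd j (fun y => pd k ℓ y) x)) * v x ^ 2) * (∑ j, ∑ k, ginv j k * pd j (fun y => pd k ℓ y) x) := by
      calc (∑ j, (((∑ p, ∑ q, (ginv p q * pd j (fun y => pd p v y) x * pd q v x
                + ginv p q * pd p v x * pd j (fun y => pd q v y) x))
              - (((-(∑ p, ∑ q, ginv p q * pd j (fun y => pd p (fun z => pd q ℓ z) y) x))
                  + (∑ p, ∑ q, (ginv p q * pd j (fun y => pd p ℓ y) x * pd q ℓ x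
                      + ginv p q * pd p ℓ x * pd j (fun y => pd q ℓ y) x))) * v x ^ 2
                + (-(∑ p, ∑ q, ginv p q * pd p (fun z => pd q ℓ z) x)
                    + (∑ p, ∑ q, ginv p q * pd p ℓ x * pd q ℓ x)) * (2 * v x * pd j v x)))
            * (∑ k, ginv j k * pd k ℓ x)
            + ((∑ p, ∑ q, ginv p q * pd p v x * pd q v x)
                - (-(∑ p, ∑ q, ginv p q * pd p (fun z => pd q ℓ z) x)
                    + (∑ p, ∑ q, ginv p q * pd p ℓ x * pd q ℓ x)) * v x ^ 2)
              * (∑ k, ginv j k * pd j (fun y => pd k ℓ y) x)))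
          = ∑ j, ((∑ i, ginv j i * pd i ℓ x) * (∑ p, ∑ q, ginv p q * pd j (fun y => pd p v y) x * pd q v x)
              + (∑ i, ginv j i * pd i ℓ x) * (∑ p, ∑ q, ginv p q * pd p v x * pd j (fun y => pd q v y) x)
              + (v x ^ 2) * ((∑ i, ginv j i * pd i ℓ x) * (∑ p, ∑ q, ginv p q * pd j (fun y => pd p (fun z => pd q ℓ z) y) x))
              + (-(v x ^ 2)) * ((∑ i, ginv j i * pd i ℓ x)
                  * (∑ p, ∑ q, ginv p q * pd j (fun y => pd p ℓ y) x * pd q ℓ x))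
              + (-(v x ^ 2)) * ((∑ i, ginv j i * pd i ℓ x)
                  * (∑ p, ∑ q, ginv p q * pd p ℓ x * pd j (fun y => pd q ℓ y) x))
              + (-(2 * v x * ((∑ j, ∑ k, ginv j k * pd j ℓ x * pd k ℓ x) - (∑ j, ∑ k, ginv j k * pd j (fun y => pd k ℓ y) x)))) * (pd j v x * (∑ i, ginv j i * pd i ℓ x))
              + ((∑ j, ∑ k, ginv j k * pd j v x * pd k v x) - ((∑ j, ∑ k, ginv j k * pd j ℓ x * pd k ℓ x) - (∑ j, ∑ k, ginv j k * pd j (fun y => pd k ℓ y) x)) * v x ^ 2) * (∑ k, ginv j k * pd j (fun y => pd k ℓ y) x)) := by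
            refine Finset.sum_congr rfl fun j _ => ?_
            rw [sum2_split, sum2_split]; ring
        _ = 2 * (∑ j, ∑ k, (∑ i, ginv j i * pd i v x) * (∑ i, ginv k i * pd i ℓ x) * pd j (fun y => pd k v y) x) + v x ^ 2 * (∑ j, (∑ i, ginv j i * pd i ℓ x) * (∑ k, ∑ l, ginv k l * pd j (fun y => pd k (fun z => pd l ℓ z) y) x)) - 2 * v x ^ 2 * (∑ j, ∑ k, (∑ i, ginv j i * pd i ℓ x) * (∑ i, ginv k i * pd i ℓ x) * pd j (fun y => pd k ℓ y) x) - 2 * v x * ((∑ j, ∑ k, ginv j k * pd j ℓ x * pd k ℓ x) - (∑ j, ∑ k, ginv j k * pd j (fun y => pd k ℓ y) x)) * (∑ j, ∑ k, ginv j k * pd j ℓ x * pd k v x)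
            + ((∑ j, ∑ k, ginv j k * pd j v x * pd k v x) - ((∑ j, ∑ k, ginv j k * pd j ℓ x * pd k ℓ x) - (∑ j, ∑ k, ginv j k * pd j (fun y => pd k ℓ y) x)) * v x ^ 2) * (∑ j, ∑ k, ginv j k * pd j (fun y => pd k ℓ y) x) := by
            simp only [Finset.sum_add_distrib, ← Finset.mul_sum]
            rw [contract_right ginv (fun j p => pd j (fun y => pd p v y) x) (fun i => pd i ℓ x)
                (fun i => pd i v x),
              contract_left ginv hsymm (fun j q => pd j (fun y => pd q v y) x) (fun i => pd i ℓ x)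
                (fun i => pd i v x),
              contract_right ginv (fun j p => pd j (fun y => pd p ℓ y) x) (fun i => pd i ℓ x)
                (fun i => pd i ℓ x),
              contract_left ginv hsymm (fun j q => pd j (fun y => pd q ℓ y) x) (fun i => pd i ℓ x)
                (fun i => pd i ℓ x),
              vec_pair ginv (fun j => pd j v x) (fun i => pd i ℓ x),
              hswapBup, hswapB]
            ring
    calc (∑ j, pd j (fun y =>
          -(2 * (∑ p, ∑ q, ginv p q * pd p ℓ y * pd q v y) + σ y * v y)
            * (∑ k, ginv j k * pd k v y)
          + v y ^ 2 / 2 * (∑ k, ginv j k * pd k σ y)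
          + ((∑ p, ∑ q, ginv p q * pd p v y * pd q v y)
              - (-(∑ p, ∑ q, ginv p q * pd p (fun z => pd q ℓ z) y)
                  + (∑ p, ∑ q, ginv p q * pd p ℓ y * pd q ℓ y)) * v y ^ 2)
            * (∑ k, ginv j k * pd k ℓ y)) x)
        = (∑ j, ((-(2 * (∑ p, ∑ q, (ginv p q * pd j (fun y => pd p ℓ y) x * pd q v x
              + ginv p q * pd p ℓ x * pd j (fun y => pd q v y) x))
              + (pd j σ x * v x + σ x * pd j v x))) * (∑ k, ginv j k * pd k v x)
            + (-(2 * (∑ p, ∑ q, ginv p q * pd p ℓ x * pd q v x) + σ x * v x))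
              * (∑ k, ginv j k * pd j (fun y => pd k v y) x)))
          + (∑ j, ((2 * v x * pd j v x / 2) * (∑ k, ginv j k * pd k σ x)
              + (v x ^ 2 / 2) * (∑ k, ginv j k * pd j (fun y => pd k σ y) x)))
            + (∑ j, (((∑ p, ∑ q, (ginv p q * pd j (fun y => pd p v y) x * pd q v x
                  + ginv p q * pd p v x * pd j (fun y => pd q v y) x))
                - (((-(∑ p, ∑ q, ginv p q * pd j (fun y => pd p (fun z => pd q ℓ z) y) x))
                    + (∑ p, ∑ q, (ginv p q * pd j (fun y => pd p ℓ y) x * pd q ℓ x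
                        + ginv p q * pd p ℓ x * pd j (fun y => pd q ℓ y) x))) * v x ^ 2
                  + (-(∑ p, ∑ q, ginv p q * pd p (fun z => pd q ℓ z) x)
                      + (∑ p, ∑ q, ginv p q * pd p ℓ x * pd q ℓ x)) * (2 * v x * pd j v x)))
              * (∑ k, ginv j k * pd k ℓ x)
              + ((∑ p, ∑ q, ginv p q * pd p v x * pd q v x)
                  - (-(∑ p, ∑ q, ginv p q * pd p (fun z => pd q ℓ z) x)
                      + (∑ p, ∑ q, ginv p q * pd p ℓ x * pd q ℓ x)) * v x ^ 2)
                * (∑ k, ginv j k * pd j (fun y => pd k ℓ y) x))) := by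
          rw [← Finset.sum_add_distrib, ← Finset.sum_add_distrib]
          refine Finset.sum_congr rfl fun j _ => ?_
          exact (((hT1 j).add (hT2 j)).add (hT3 j)).pd_eq
      _ = (-2 * (∑ j, ∑ k, (∑ i, ginv j i * pd i v x) * (∑ i, ginv k i * pd i v x) * pd j (fun y => pd k ℓ y) x) - 2 * (∑ j, ∑ k, (∑ i, ginv j i * pd i v x) * (∑ i, ginv k i * pd i ℓ x) * pd j (fun y => pd k v y) x) - v x * (∑ j, ∑ k, ginv j k * pd j σ x * pd k v x) - σ x * (∑ j, ∑ k, ginv j k * pd j v x * pd k v x) - (2 * (∑ j, ∑ k, ginv j k * pd j ℓ x * pd k v x) + σ x * v x) * (∑ j, ∑ k, ginv j k * pd j (fun y => pd k v y) x))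
          + (v x * (∑ j, ∑ k, ginv j k * pd j σ x * pd k v x) + v x ^ 2 / 2 * (∑ j, ∑ k, ginv j k * pd j (fun y => pd k σ y) x))
          + (2 * (∑ j, ∑ k, (∑ i, ginv j i * pd i v x) * (∑ i, ginv k i * pd i ℓ x) * pd j (fun y => pd k v y) x) + v x ^ 2 * (∑ j, (∑ i, ginv j i * pd i ℓ x) * (∑ k, ∑ l, ginv k l * pd j (fun y => pd k (fun z => pd l ℓ z) y) x)) - 2 * v x ^ 2 * (∑ j, ∑ k, (∑ i, ginv j i * pd i ℓ x) * (∑ i, ginv k i * pd i ℓ x) * pd j (fun y => pd k ℓ y) x) - 2 * v x * ((∑ j, ∑ k, ginv j k * pd j ℓ x * pd k ℓ x) - (∑ j, ∑ k, ginv j k * pd j (fun y => pd k ℓ y) x)) * (∑ j, ∑ k, ginv j k * pd j ℓ x * pd k v x)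
              + ((∑ j, ∑ k, ginv j k * pd j v x * pd k v x) - ((∑ j, ∑ k, ginv j k * pd j ℓ x * pd k ℓ x) - (∑ j, ∑ k, ginv j k * pd j (fun y => pd k ℓ y) x)) * v x ^ 2) * (∑ j, ∑ k, ginv j k * pd j (fun y => pd k ℓ y) x)) := by
          rw [hsum1, hsum2, hsum3]
  ------------------------------------------------------------------
  -- assemble
  ------------------------------------------------------------------
  simp only [pair_grad hg hginv hginv']
  rw [key1, key5, key6]
  simp only [box, hessV, grad]
  ring


end
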